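/- arXiv:1301.1786 — 2 statements merged into one kernel-verified Lean document; each statement's English description precedes it below -/
import Mathlib

section
/- Let m ≥ 0 and ν ≥ m+1 be integers. Then, as z → 0, L_{m,ν}(z) = -z^{2ν-m-1}/(2^{2ν-m-1} ν! (ν-m-1)!) + o(z^{2ν-m-1}). In particular, L_{m,ν} has a zero of order exactly 2ν-m-1 at z = 0. -/
open scoped Nat
open Asymptotics MeasureTheory

noncomputable def besselJNat (n : ℕ) (z : ℂ) : ℂ :=
  ∑' r : ℕ, ((-1) ^ r / ((Nat.factorial r : ℂ) * (Nat.factorial (n + r) : ℂ))) * (z / 2) ^ (n + 2 * r)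

/-- Bessel function of the first kind of integer order, with `J_{-n} = (-1)^n J_n`. -/
noncomputable def besselJ (n : ℤ) (z : ℂ) : ℂ :=
  if 0 ≤ n then besselJNat n.toNat z else (-1 : ℂ) ^ n * besselJNat (-n).toNat z

/-- `L_{m,ν}(z) = J_{ν+1}(z) J_{ν-m}(z) - J_ν(z) J_{ν-m-1}(z)`. -/
noncomputable def besselL (m : ℕ) (ν : ℤ) (z : ℂ) : ℂ :=
  besselJ (ν + 1) z * besselJ (ν - m) z - besselJ ν z * besselJ (ν - m - 1) z

set_option maxHeartbeats 1000000 in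
lemma aux_tendsto (a : ℕ → ℂ) (ha : ∀ r, ‖a r‖ ≤ 1 / r.factorial) :
    Filter.Tendsto (fun w : ℂ => ∑' r : ℕ, a r * w ^ r) (nhds 0) (nhds (a 0)) := by
  have hsum : ∀ w : ℂ, Summable (fun r : ℕ => a r * w ^ r) := by
    intro w
    apply Summable.of_norm_bounded (g := fun r => ‖w‖ ^ r / r.factorial)
      (Real.summable_pow_div_factorial ‖w‖)
    intro r
    rw [norm_mul, norm_pow]
    calc ‖a r‖ * ‖w‖ ^ r ≤ (1 / r.factorial) * ‖w‖ ^ r := by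
          exact mul_le_mul_of_nonneg_right (ha r) (by positivity)
      _ = ‖w‖ ^ r / r.factorial := by ring
  set C : ℝ := ∑' r : ℕ, (1 / r.factorial : ℝ) with hC
  have hCsum : Summable (fun r : ℕ => (1 / r.factorial : ℝ)) := by
    simpa using Real.summable_pow_div_factorial 1
  rw [← tendsto_sub_nhds_zero_iff]
  refine squeeze_zero_norm' (a := fun w : ℂ => ‖w‖ * C) ?_ ?_
  · have h1 : ∀ᶠ w : ℂ in nhds 0, ‖w‖ ≤ 1 := by
      have := Metric.closedBall_mem_nhds (0 : ℂ) one_pos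
      filter_upwards [this] with w hw
      simpa [Metric.mem_closedBall] using hw
    filter_upwards [h1] with w hw
    have h0 : ∑' r : ℕ, a r * w ^ r = a 0 + ∑' r : ℕ, a (r + 1) * w ^ (r + 1) := by
      simpa using Summable.tsum_eq_zero_add (hsum w)
    rw [h0, add_sub_cancel_left]
    have hbound : ∀ r : ℕ, ‖a (r + 1) * w ^ (r + 1)‖ ≤ ‖w‖ * (1 / r.factorial) := by
      intro r
      rw [norm_mul, norm_pow]
      have h1' : ‖a (r + 1)‖ ≤ 1 / r.factorial := by
        refine (ha (r + 1)).trans ?_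
        exact one_div_le_one_div_of_le (by positivity)
          (by exact_mod_cast Nat.factorial_le (Nat.le_succ r))
      have h2' : ‖w‖ ^ (r + 1) ≤ ‖w‖ := by
        calc ‖w‖ ^ (r + 1) = ‖w‖ * ‖w‖ ^ r := by ring
          _ ≤ ‖w‖ * 1 := by
              exact mul_le_mul_of_nonneg_left (pow_le_one₀ (norm_nonneg w) hw) (norm_nonneg w)
          _ = ‖w‖ := mul_one _
      calc ‖a (r + 1)‖ * ‖w‖ ^ (r + 1) ≤ (1 / r.factorial) * ‖w‖ := by
            exact mul_le_mul h1' h2' (by positivity) (by positivity)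
        _ = ‖w‖ * (1 / r.factorial) := by ring
    have := tsum_of_norm_bounded ((hCsum.hasSum).mul_left ‖w‖) hbound
    simpa [tsum_mul_left, hC] using this
  · have : Filter.Tendsto (fun w : ℂ => ‖w‖ * C) (nhds 0) (nhds (‖(0:ℂ)‖ * C)) :=
      ((continuous_norm).tendsto 0).mul_const C
    simpa using this

noncomputable def besselF (n : ℕ) (w : ℂ) : ℂ :=
  ∑' r : ℕ, ((-1 : ℂ) ^ r / ((r.factorial : ℂ) * ((n + r).factorial : ℂ))) * w ^ r

lemma besselF_coeff_norm (n r : ℕ) :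
    ‖((-1 : ℂ) ^ r / ((r.factorial : ℂ) * ((n + r).factorial : ℂ)))‖ ≤ 1 / r.factorial := by
  rw [norm_div, norm_pow, norm_neg, norm_one, one_pow, norm_mul]
  simp only [Complex.norm_natCast]
  have h1 : (0:ℝ) < r.factorial := by exact_mod_cast Nat.factorial_pos r
  have h2 : (r.factorial : ℝ) ≤ (r.factorial : ℝ) * (n + r).factorial := by
    nth_rewrite 1 [← mul_one (r.factorial : ℝ)]
    gcongr
    exact_mod_cast Nat.one_le_iff_ne_zero.mpr (Nat.factorial_ne_zero _)
  exact one_div_le_one_div_of_le h1 h2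

lemma besselF_tendsto (n : ℕ) :
    Filter.Tendsto (besselF n) (nhds 0) (nhds (1 / (n.factorial : ℂ))) := by
  have := aux_tendsto (fun r => ((-1 : ℂ) ^ r / ((r.factorial : ℂ) * ((n + r).factorial : ℂ))))
    (besselF_coeff_norm n)
  show Filter.Tendsto (fun w => besselF n w) _ _
  simpa [besselF] using this

lemma besselJNat_eq (n : ℕ) (z : ℂ) :
    besselJNat n z = (z / 2) ^ n * besselF n ((z / 2) ^ 2) := by
  rw [besselJNat, besselF, ← tsum_mul_left]
  congr 1
  ext r
  rw [pow_add, pow_mul]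
  ring

lemma besselJ_natCast (n : ℕ) (z : ℂ) : besselJ (n : ℤ) z = besselJNat n z := by
  simp [besselJ]

theorem stmt3 (m ν : ℕ) (h : m + 1 ≤ ν) :
    (fun z : ℂ => besselL m ν z +
        z ^ (2 * ν - m - 1) /
          ((2 : ℂ) ^ (2 * ν - m - 1) * (Nat.factorial ν : ℂ) * (Nat.factorial (ν - m - 1) : ℂ)))
      =o[nhds (0 : ℂ)] fun z : ℂ => z ^ (2 * ν - m - 1) := by
  obtain ⟨k, rfl⟩ : ∃ k, ν = k + m + 1 := ⟨ν - m - 1, by omega⟩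
  set N : ℕ := 2 * k + m + 1 with hN
  have hNe : 2 * (k + m + 1) - m - 1 = N := by omega
  have hsub1 : (k + m + 1) - m = k + 1 := by omega
  have hsub2 : (k + m + 1) - m - 1 = k := by omega
  rw [hNe, hsub2]
  -- rewrite besselL
  have hL : ∀ z : ℂ, besselL m ((k + m + 1 : ℕ) : ℤ) z =
      (z / 2) ^ N * ((z / 2) ^ 2 * (besselF (k + m + 2) ((z/2)^2) * besselF (k + 1) ((z/2)^2))
        - besselF (k + m + 1) ((z/2)^2) * besselF k ((z/2)^2)) := by
    intro z
    have e1 : ((k + m + 1 : ℕ) : ℤ) + 1 = ((k + m + 2 : ℕ) : ℤ) := by push_cast; ring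
    have e2 : ((k + m + 1 : ℕ) : ℤ) - (m : ℕ) = ((k + 1 : ℕ) : ℤ) := by push_cast; ring
    have e3 : ((k + m + 1 : ℕ) : ℤ) - (m : ℕ) - 1 = ((k : ℕ) : ℤ) := by push_cast; ring
    rw [besselL, e1, e3, e2, besselJ_natCast, besselJ_natCast, besselJ_natCast, besselJ_natCast,
      besselJNat_eq, besselJNat_eq, besselJNat_eq, besselJNat_eq]
    have p1 : (k + m + 2) + (k + 1) = N + 2 := by omega
    have p2 : (k + m + 1) + k = N := by omega
    calc (z/2)^(k+m+2) * besselF (k+m+2) ((z/2)^2) * ((z/2)^(k+1) * besselF (k+1) ((z/2)^2))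
          - (z/2)^(k+m+1) * besselF (k+m+1) ((z/2)^2) * ((z/2)^k * besselF k ((z/2)^2))
        = (z/2)^(N+2) * (besselF (k+m+2) ((z/2)^2) * besselF (k+1) ((z/2)^2))
          - (z/2)^N * (besselF (k+m+1) ((z/2)^2) * besselF k ((z/2)^2)) := by
          rw [← p1, ← p2, pow_add, pow_add]; ring
      _ = _ := by rw [pow_add]; ring
  -- define the small factor
  set H : ℂ → ℂ := fun z =>
    (1 / 2 ^ N) * ((z / 2) ^ 2 * (besselF (k + m + 2) ((z/2)^2) * besselF (k + 1) ((z/2)^2))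
        - besselF (k + m + 1) ((z/2)^2) * besselF k ((z/2)^2))
      + 1 / ((2 : ℂ) ^ N * ((k + m + 1).factorial : ℂ) * (k.factorial : ℂ)) with hH
  have heq : ∀ z : ℂ, besselL m ((k + m + 1 : ℕ) : ℤ) z +
      z ^ N / ((2 : ℂ) ^ N * ((k + m + 1).factorial : ℂ) * (k.factorial : ℂ)) = z ^ N * H z := by
    intro z
    rw [hL z, hH]
    field_simp
    rw [div_pow]
    field_simp
  have hHto : Filter.Tendsto H (nhds 0) (nhds 0) := by
    have hw : Filter.Tendsto (fun z : ℂ => (z / 2) ^ 2) (nhds 0) (nhds 0) := by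
      have : Filter.Tendsto (fun z : ℂ => (z / 2) ^ 2) (nhds 0) (nhds (((0:ℂ) / 2) ^ 2)) := by
        exact ((continuous_id.div_const 2).pow 2).tendsto 0
      simpa using this
    have t1 := (besselF_tendsto (k + m + 2)).comp hw
    have t2 := (besselF_tendsto (k + 1)).comp hw
    have t3 := (besselF_tendsto (k + m + 1)).comp hw
    have t4 := (besselF_tendsto k).comp hw
    have tz : Filter.Tendsto (fun z : ℂ => (z / 2) ^ 2) (nhds 0) (nhds 0) := hw
    have hmain : Filter.Tendsto H (nhds 0) (nhds
        ((1 / 2 ^ N) * ((0:ℂ) * (1/((k+m+2).factorial:ℂ) * (1/((k+1).factorial:ℂ)))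
          - 1/((k+m+1).factorial:ℂ) * (1/(k.factorial:ℂ)))
          + 1 / ((2 : ℂ) ^ N * ((k + m + 1).factorial : ℂ) * (k.factorial : ℂ)))) := by
      apply Filter.Tendsto.add _ tendsto_const_nhds
      apply Filter.Tendsto.const_mul
      exact (tz.mul (t1.mul t2)).sub (t3.mul t4)
    have hval : (1 / (2:ℂ) ^ N) * ((0:ℂ) * (1/((k+m+2).factorial:ℂ) * (1/((k+1).factorial:ℂ)))
          - 1/((k+m+1).factorial:ℂ) * (1/(k.factorial:ℂ)))
          + 1 / ((2 : ℂ) ^ N * ((k + m + 1).factorial : ℂ) * (k.factorial : ℂ)) = 0 := by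
      have h1 : ((k+m+1).factorial : ℂ) ≠ 0 := by exact_mod_cast Nat.factorial_ne_zero _
      have h2 : ((k).factorial : ℂ) ≠ 0 := by exact_mod_cast Nat.factorial_ne_zero _
      field_simp
      ring
    rwa [hval] at hmain
  have hHo : H =o[nhds (0 : ℂ)] (fun _ => (1 : ℂ)) := by
    rwa [isLittleO_one_iff]
  have : (fun z : ℂ => z ^ N * H z) =o[nhds (0 : ℂ)] (fun z : ℂ => z ^ N * 1) :=
    (isBigO_refl (fun z : ℂ => z ^ N) _).mul_isLittleO hHo
  simp only [mul_one] at this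
  exact this.congr' (by filter_upwards with z using (heq z).symm) (by rfl)
end

section
/- Let m ≥ 0 and ν be integers and λ a nonzero real zero of L_{m,ν} with J_ν(λ) J_{ν-m}(λ) ≠ 0. Then the quantity N(λ) := (J_ν(λ)²/2)(J_ν'(λ)²/J_ν(λ)² + J_{ν-m}'(λ)²/J_{ν-m}(λ)²) + (J_ν(λ)²/2)(2 - ((ν-m)² + ν²)/λ²) equals ∫₀¹ J_ν(λr)² r dr + (J_ν(λ)²/J_{ν-m}(λ)²) ∫₀¹ J_{ν-m}(λr)² r dr; in particular N(λ) > 0. -/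
open scoped Nat
open Asymptotics MeasureTheory

/-- `L_{m,ν}(z) = -z^m (d/dz)(z^{-m} J_ν(z) J_{ν-m}(z))`. -/
noncomputable def besselLd (m : ℕ) (ν : ℤ) (z : ℂ) : ℂ :=
  -z ^ m * deriv (fun w : ℂ => w ^ (-(m : ℤ)) * (besselJ ν w * besselJ (ν - m) w)) z

namespace BesselAux

noncomputable def bc (n r : ℕ) : ℂ :=
  (-1) ^ r / ((Nat.factorial r : ℂ) * (Nat.factorial (n + r) : ℂ))

noncomputable def t0 (n r : ℕ) (z : ℂ) : ℂ := bc n r * (z / 2) ^ (n + 2 * r)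
noncomputable def t1 (n r : ℕ) (z : ℂ) : ℂ :=
  bc n r * (((n + 2 * r : ℕ) : ℂ) / 2) * (z / 2) ^ (n + 2 * r - 1)
noncomputable def t2 (n r : ℕ) (z : ℂ) : ℂ :=
  bc n r * (((n + 2 * r : ℕ) : ℂ) * ((n + 2 * r - 1 : ℕ) : ℂ) / 4) * (z / 2) ^ (n + 2 * r - 2)

noncomputable def ub (n : ℕ) (R : ℝ) (r : ℕ) : ℝ := ((n:ℝ) + 2*r + 1) ^ 2 * R ^ (n + 2*r) / r !

lemma norm_bc_le (n r : ℕ) : ‖bc n r‖ ≤ 1 / r ! := by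
  have h1 : (1:ℝ) ≤ (n+r)! := by exact_mod_cast Nat.one_le_iff_ne_zero.2 (Nat.factorial_ne_zero _)
  have h2 : (0:ℝ) < r ! := by exact_mod_cast Nat.factorial_pos r
  rw [bc, norm_div, norm_pow, norm_neg, norm_one, one_pow, norm_mul]
  simp only [Complex.norm_natCast]
  rw [div_le_div_iff₀ (by positivity) h2]
  nlinarith

lemma nat_le_pow (n r : ℕ) : ((n : ℝ) + 2*r + 1) ≤ (n+1) * 3 ^ r := by
  induction r with
  | zero => simp
  | succ r ih =>
    have h3 : (0:ℝ) ≤ (n+1) * 3 ^ r := by positivity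
    push_cast at ih ⊢
    rw [pow_succ]
    nlinarith

/-- master summable bound -/
lemma summable_ub (n : ℕ) (R : ℝ) (hR : 1 ≤ R) : Summable (ub n R) := by
  have h0 : (0:ℝ) < R := lt_of_lt_of_le one_pos hR
  have hle : ∀ r : ℕ, ub n R r ≤ ((n:ℝ)+1)^2 * R ^ n * ((9 * R^2) ^ r / r !) := by
    intro r
    have key : ((n:ℝ) + 2*r + 1) ^ 2 * R ^ (n + 2*r) ≤ ((n:ℝ)+1)^2 * R^n * (9*R^2)^r := by
      have h2 : ((n:ℝ) + 2*r + 1)^2 ≤ (((n:ℝ)+1) * 3^r)^2 :=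
        pow_le_pow_left₀ (by positivity) (nat_le_pow n r) 2
      have h3 : R ^ (n + 2*r) = R ^ n * (R^2)^r := by rw [← pow_mul, ← pow_add]
      calc ((n:ℝ) + 2*r + 1) ^ 2 * R ^ (n + 2*r)
          ≤ (((n:ℝ)+1) * 3^r)^2 * (R ^ n * (R^2)^r) := by
            rw [← h3]; exact mul_le_mul_of_nonneg_right h2 (by positivity)
        _ = ((n:ℝ)+1)^2 * R^n * (9*R^2)^r := by
            rw [mul_pow, mul_pow, ← pow_mul, ← pow_mul, mul_comm r 2, pow_mul, pow_mul]
            norm_num; ring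
    calc ub n R r = ((n:ℝ) + 2*r + 1) ^ 2 * R ^ (n + 2*r) / r ! := by rw [ub]
      _ ≤ ((n:ℝ)+1)^2 * R^n * (9*R^2)^r / r ! :=
          div_le_div_of_nonneg_right key (Nat.cast_nonneg _)
      _ = ((n:ℝ)+1)^2 * R ^ n * ((9 * R^2) ^ r / r !) := by ring
  exact Summable.of_nonneg_of_le (fun r => by rw [ub]; positivity) hle
    ((Real.summable_pow_div_factorial (9 * R^2)).mul_left _)

lemma norm_term_le {c z : ℂ} {C R : ℝ} (hc : ‖c‖ ≤ C) (e k : ℕ) (he : e ≤ k)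
    (hz : ‖z‖ ≤ 2 * R) (hR : 1 ≤ R) : ‖c * (z/2)^e‖ ≤ C * R ^ k := by
  have h0 : (0:ℝ) < R := lt_of_lt_of_le one_pos hR
  rw [norm_mul, norm_pow, norm_div]
  have h1 : ‖z‖ / ‖(2:ℂ)‖ ≤ R := by
    rw [Complex.norm_ofNat]; linarith [hz]
  have h2 : (‖z‖ / ‖(2:ℂ)‖) ^ e ≤ R ^ e := pow_le_pow_left₀ (by positivity) h1 e
  have h3 : R ^ e ≤ R ^ k := pow_le_pow_right₀ hR he
  have hC : 0 ≤ C := le_trans (norm_nonneg c) hc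
  exact mul_le_mul hc (le_trans h2 h3) (by positivity) hC

lemma cast_pos_fact (r : ℕ) : (0:ℝ) < r ! := by exact_mod_cast Nat.factorial_pos r

lemma norm_t0_le {z : ℂ} {R : ℝ} (n r : ℕ) (hz : ‖z‖ ≤ 2*R) (hR : 1 ≤ R) :
    ‖t0 n r z‖ ≤ ub n R r := by
  have hc : ‖bc n r‖ ≤ 1 / r ! * ((n:ℝ)+2*r+1)^2 := by
    calc ‖bc n r‖ ≤ 1 / r ! := norm_bc_le n r
      _ ≤ 1 / r ! * ((n:ℝ)+2*r+1)^2 := by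
          have hX : (1:ℝ) ≤ (n:ℝ)+2*r+1 := by
            have := Nat.cast_nonneg (α := ℝ) n; have := Nat.cast_nonneg (α := ℝ) r; linarith
          nlinarith [one_div_pos.2 (cast_pos_fact r), sq_nonneg ((n:ℝ)+2*r)]
  calc ‖t0 n r z‖ ≤ (1 / r ! * ((n:ℝ)+2*r+1)^2) * R ^ (n + 2*r) := by
        rw [t0]; exact norm_term_le hc _ _ le_rfl hz hR
    _ = ub n R r := by rw [ub]; ring

lemma norm_t1_le {z : ℂ} {R : ℝ} (n r : ℕ) (hz : ‖z‖ ≤ 2*R) (hR : 1 ≤ R) :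
    ‖t1 n r z‖ ≤ ub n R r := by
  have hc : ‖bc n r * (((n + 2 * r : ℕ) : ℂ) / 2)‖ ≤ 1 / r ! * ((n:ℝ)+2*r+1)^2 := by
    rw [norm_mul]
    apply mul_le_mul (norm_bc_le n r) ?_ (norm_nonneg _) (by positivity)
    rw [norm_div, Complex.norm_natCast, Complex.norm_ofNat]
    push_cast
    nlinarith [Nat.cast_nonneg (α := ℝ) n, Nat.cast_nonneg (α := ℝ) r]
  calc ‖t1 n r z‖ ≤ (1 / r ! * ((n:ℝ)+2*r+1)^2) * R ^ (n + 2*r) := by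
        rw [t1]; exact norm_term_le hc _ _ (Nat.sub_le _ _) hz hR
    _ = ub n R r := by rw [ub]; ring

lemma norm_t2_le {z : ℂ} {R : ℝ} (n r : ℕ) (hz : ‖z‖ ≤ 2*R) (hR : 1 ≤ R) :
    ‖t2 n r z‖ ≤ ub n R r := by
  have hc : ‖bc n r * (((n + 2 * r : ℕ) : ℂ) * ((n + 2 * r - 1 : ℕ) : ℂ) / 4)‖
      ≤ 1 / r ! * ((n:ℝ)+2*r+1)^2 := by
    rw [norm_mul]
    apply mul_le_mul (norm_bc_le n r) ?_ (norm_nonneg _) (by positivity)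
    rw [norm_div, norm_mul, Complex.norm_natCast, Complex.norm_natCast, Complex.norm_ofNat]
    have h1 : ((n + 2*r - 1 : ℕ) : ℝ) ≤ (n:ℝ) + 2*r := by
      have := Nat.sub_le (n + 2*r) 1
      calc ((n + 2*r - 1 : ℕ) : ℝ) ≤ ((n + 2*r : ℕ):ℝ) := by exact_mod_cast this
        _ = (n:ℝ) + 2*r := by push_cast; ring
    have h2 : (0:ℝ) ≤ ((n + 2*r - 1 : ℕ) : ℝ) := Nat.cast_nonneg _
    push_cast
    nlinarith [Nat.cast_nonneg (α := ℝ) n, Nat.cast_nonneg (α := ℝ) r]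
  calc ‖t2 n r z‖ ≤ (1 / r ! * ((n:ℝ)+2*r+1)^2) * R ^ (n + 2*r) := by
        rw [t2]; exact norm_term_le hc _ _ (Nat.sub_le _ _) hz hR
    _ = ub n R r := by rw [ub]; ring



lemma hasDerivAt_t0 (n r : ℕ) (z : ℂ) : HasDerivAt (fun w => t0 n r w) (t1 n r z) z := by
  have h := (((hasDerivAt_id z).div_const 2).pow (n + 2*r)).const_mul (bc n r)
  refine h.congr_deriv ?_
  rw [t1]; push_cast; simp only [id_eq]; ring

lemma hasDerivAt_t1 (n r : ℕ) (z : ℂ) : HasDerivAt (fun w => t1 n r w) (t2 n r z) z := by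
  have h := (((hasDerivAt_id z).div_const 2).pow (n + 2*r - 1)).const_mul
    (bc n r * (((n + 2 * r : ℕ) : ℂ) / 2))
  have hfun : (fun w => t1 n r w) = fun w : ℂ =>
      bc n r * (((n + 2 * r : ℕ) : ℂ) / 2) * (w/2) ^ (n + 2*r - 1) := by
    funext w; rw [t1]
  rw [hfun]
  refine h.congr_deriv ?_
  rw [t2, show n + 2*r - 1 - 1 = n + 2*r - 2 by omega]; push_cast; simp only [id_eq]; ring

lemma exists_R (z : ℂ) : ∃ R : ℝ, 1 ≤ R ∧ ‖z‖ ≤ 2 * R :=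
  ⟨max 1 ‖z‖, le_max_left _ _, by
    have := le_max_right 1 ‖z‖
    have := le_max_left 1 ‖z‖
    linarith⟩

lemma summable_t0 (n : ℕ) (z : ℂ) : Summable (fun r => t0 n r z) := by
  obtain ⟨R, hR, hz⟩ := exists_R z
  exact Summable.of_norm_bounded (summable_ub n R hR) (fun r => norm_t0_le n r hz hR)

lemma summable_t1 (n : ℕ) (z : ℂ) : Summable (fun r => t1 n r z) := by
  obtain ⟨R, hR, hz⟩ := exists_R z
  exact Summable.of_norm_bounded (summable_ub n R hR) (fun r => norm_t1_le n r hz hR)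

lemma summable_t2 (n : ℕ) (z : ℂ) : Summable (fun r => t2 n r z) := by
  obtain ⟨R, hR, hz⟩ := exists_R z
  exact Summable.of_norm_bounded (summable_ub n R hR) (fun r => norm_t2_le n r hz hR)

noncomputable def D1 (n : ℕ) (z : ℂ) : ℂ := ∑' r, t1 n r z
noncomputable def D2 (n : ℕ) (z : ℂ) : ℂ := ∑' r, t2 n r z

lemma besselJNat_eq (n : ℕ) : besselJNat n = fun z => ∑' r, t0 n r z := rfl

lemma hasDerivAt_besselJNat (n : ℕ) (z : ℂ) : HasDerivAt (besselJNat n) (D1 n z) z := by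
  rw [besselJNat_eq, D1]
  obtain ⟨R, hR, hz⟩ := exists_R z
  have hz' : z ∈ Metric.ball (0:ℂ) (2*R + 1) := by
    rw [Metric.mem_ball, dist_zero_right]; linarith
  refine hasDerivAt_tsum_of_isPreconnected (summable_ub n (R+1) (by linarith))
    Metric.isOpen_ball (convex_ball (0:ℂ) _).isPreconnected
    (fun r y _ => hasDerivAt_t0 n r y) (fun r y hy => ?_) ?_ (summable_t0 n 0) hz'
  · rw [Metric.mem_ball, dist_zero_right] at hy
    exact norm_t1_le n r (by linarith) (by linarith)
  · rw [Metric.mem_ball, dist_zero_right, norm_zero]; linarith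

lemma hasDerivAt_D1 (n : ℕ) (z : ℂ) : HasDerivAt (D1 n) (D2 n z) z := by
  unfold D1 D2
  obtain ⟨R, hR, hz⟩ := exists_R z
  have hz' : z ∈ Metric.ball (0:ℂ) (2*R + 1) := by
    rw [Metric.mem_ball, dist_zero_right]; linarith
  refine hasDerivAt_tsum_of_isPreconnected (summable_ub n (R+1) (by linarith))
    Metric.isOpen_ball (convex_ball (0:ℂ) _).isPreconnected
    (fun r y _ => hasDerivAt_t1 n r y) (fun r y hy => ?_) ?_ (summable_t1 n 0) hz'
  · rw [Metric.mem_ball, dist_zero_right] at hy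
    exact norm_t2_le n r (by linarith) (by linarith)
  · rw [Metric.mem_ball, dist_zero_right, norm_zero]; linarith



lemma bc_succ (n r : ℕ) : bc n (r+1) * (((r:ℂ)+1) * ((n:ℂ)+(r:ℂ)+1)) = - bc n r := by
  have h1 : ((r ! : ℂ)) ≠ 0 := Nat.cast_ne_zero.2 (Nat.factorial_ne_zero r)
  have h2 : (((n+r)! : ℂ)) ≠ 0 := Nat.cast_ne_zero.2 (Nat.factorial_ne_zero _)
  have e1 : ((r:ℂ)+1) ≠ 0 := Nat.cast_add_one_ne_zero r
  have e2 : ((n:ℂ)+(r:ℂ)+1) ≠ 0 := by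
    have := Nat.cast_add_one_ne_zero (R := ℂ) (n+r)
    push_cast at this
    convert this using 2 <;> push_cast <;> ring
  rw [bc, bc, show n + (r+1) = (n+r)+1 by omega, Nat.factorial_succ, Nat.factorial_succ]
  push_cast
  rw [pow_succ]
  field_simp [e1, e2]

lemma term_step (n r : ℕ) (z : ℂ) :
    z^2 * t2 n (r+1) z + z * t1 n (r+1) z - (n:ℂ)^2 * t0 n (r+1) z = - (z^2 * t0 n r z) := by
  unfold t0 t1 t2
  rw [show n + 2*(r+1) - 2 = n + 2*r by omega, show n + 2*(r+1) - 1 = n + 2*r + 1 by omega,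
      show n + 2*(r+1) = n + 2*r + 2 by omega]
  have hbc := bc_succ n r
  push_cast
  rw [pow_succ, pow_succ]
  linear_combination ((z/2)^(n+2*r) * z^2) * hbc

lemma term_zero (n : ℕ) (z : ℂ) :
    z^2 * t2 n 0 z + z * t1 n 0 z - (n:ℂ)^2 * t0 n 0 z = 0 := by
  unfold t0 t1 t2
  match n with
  | 0 => simp
  | 1 => norm_num; ring
  | (n+2) =>
    rw [show (n+2) + 2*0 - 2 = n by omega, show (n+2) + 2*0 - 1 = n + 1 by omega,
        show (n+2) + 2*0 = n + 2 by omega, pow_succ, pow_succ]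
    push_cast
    ring

lemma ode_nat (n : ℕ) (z : ℂ) :
    z^2 * D2 n z + z * D1 n z + (z^2 - (n:ℂ)^2) * besselJNat n z = 0 := by
  have s0 := summable_t0 n z
  have s1 := summable_t1 n z
  have s2 := summable_t2 n z
  have hb : besselJNat n z = ∑' r, t0 n r z := rfl
  have hsum : Summable (fun r => z^2 * t2 n r z + z * t1 n r z - (n:ℂ)^2 * t0 n r z) :=
    ((s2.mul_left _).add (s1.mul_left _)).sub (s0.mul_left _)
  have h1 : z^2 * D2 n z + z * D1 n z - (n:ℂ)^2 * besselJNat n z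
      = ∑' r, (z^2 * t2 n r z + z * t1 n r z - (n:ℂ)^2 * t0 n r z) := by
    rw [hb, D1, D2, ← tsum_mul_left, ← tsum_mul_left, ← tsum_mul_left (a := (n:ℂ)^2),
      ← Summable.tsum_add (s2.mul_left _) (s1.mul_left _),
      ← Summable.tsum_sub ((s2.mul_left _).add (s1.mul_left _)) (s0.mul_left _)]
  have key : (∑' r, (z^2 * t2 n r z + z * t1 n r z - (n:ℂ)^2 * t0 n r z))
      = - (z^2 * besselJNat n z) := by
    rw [Summable.tsum_eq_zero_add hsum, term_zero, zero_add]
    have : ∀ r : ℕ, z^2 * t2 n (r+1) z + z * t1 n (r+1) z - (n:ℂ)^2 * t0 n (r+1) z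
        = - (z^2 * t0 n r z) := fun r => term_step n r z
    rw [tsum_congr this, tsum_neg, tsum_mul_left, hb]
  linear_combination h1 + key

noncomputable def JD1 (n : ℤ) (z : ℂ) : ℂ :=
  if 0 ≤ n then D1 n.toNat z else (-1:ℂ)^n * D1 (-n).toNat z

noncomputable def JD2 (n : ℤ) (z : ℂ) : ℂ :=
  if 0 ≤ n then D2 n.toNat z else (-1:ℂ)^n * D2 (-n).toNat z

lemma hasDerivAt_besselJ (n : ℤ) (z : ℂ) : HasDerivAt (besselJ n) (JD1 n z) z := by
  unfold besselJ JD1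
  split_ifs with h
  · exact hasDerivAt_besselJNat _ z
  · exact (hasDerivAt_besselJNat _ z).const_mul _

lemma hasDerivAt_JD1 (n : ℤ) (z : ℂ) : HasDerivAt (JD1 n) (JD2 n z) z := by
  unfold JD1 JD2
  split_ifs with h
  · exact hasDerivAt_D1 _ z
  · exact (hasDerivAt_D1 _ z).const_mul _

lemma deriv_besselJ (n : ℤ) (z : ℂ) : deriv (besselJ n) z = JD1 n z :=
  (hasDerivAt_besselJ n z).deriv

lemma ode (n : ℤ) (z : ℂ) :
    z^2 * JD2 n z + z * JD1 n z + (z^2 - (n:ℂ)^2) * besselJ n z = 0 := by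
  unfold besselJ JD1 JD2
  split_ifs with h
  · have hc : ((n.toNat : ℕ) : ℂ) = (n : ℂ) := by
      exact_mod_cast congrArg (Int.cast : ℤ → ℂ) (Int.toNat_of_nonneg h)
    rw [← hc]
    exact ode_nat _ z
  · have hc : (((-n).toNat : ℕ) : ℂ) = -(n : ℂ) := by
      have := Int.toNat_of_nonneg (by omega : (0:ℤ) ≤ -n)
      exact_mod_cast congrArg (Int.cast : ℤ → ℂ) this
    have h2 : ((n:ℂ))^2 = ((((-n).toNat : ℕ)):ℂ)^2 := by rw [hc]; ring
    rw [h2]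
    have := ode_nat ((-n).toNat) z
    linear_combination ((-1:ℂ)^n) * this


lemma star_besselJNat (n : ℕ) (z : ℂ) : star (besselJNat n z) = besselJNat n (star z) := by
  rw [besselJNat_eq]
  simp only
  rw [tsum_star]
  apply tsum_congr
  intro r
  rw [t0, t0, bc]
  simp [star_div₀, star_mul', star_pow, map_div₀, map_pow, map_mul]

lemma star_besselJ (n : ℤ) (z : ℂ) : star (besselJ n z) = besselJ n (star z) := by
  unfold besselJ
  split_ifs with h
  · exact star_besselJNat _ z
  · rw [star_mul', star_besselJNat]
    congr 1
    have : ((-1 : ℂ) ^ n) = ((starRingEnd ℂ) ((-1:ℂ) ^ n)) := by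
      rw [map_zpow₀]; norm_num
    exact this.symm

lemma besselJ_real (n : ℤ) (x : ℝ) : besselJ n (x:ℂ) = (((besselJ n (x:ℂ)).re : ℝ) : ℂ) := by
  have h := star_besselJ n (x : ℂ)
  rw [show star ((x:ℝ):ℂ) = ((x:ℝ):ℂ) by simp [Complex.star_def, Complex.conj_ofReal]] at h
  have h' : (starRingEnd ℂ) (besselJ n (x:ℂ)) = besselJ n (x:ℂ) := h
  exact (Complex.conj_eq_iff_re.1 h').symm

lemma besselJNat_zero (n : ℕ) (hn : n ≠ 0) : besselJNat n 0 = 0 := by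
  rw [besselJNat_eq]
  simp only
  have : ∀ r : ℕ, t0 n r 0 = 0 := by
    intro r
    rw [t0, zero_div, zero_pow (by omega), mul_zero]
  simp [this]

lemma sq_mul_besselJ_zero (n : ℤ) : (n:ℂ)^2 * besselJ n 0 ^ 2 = 0 := by
  rcases eq_or_ne n 0 with h | h
  · rw [h]; simp
  · have : besselJ n 0 = 0 := by
      unfold besselJ
      split_ifs with h'
      · exact besselJNat_zero _ (by omega)
      · rw [besselJNat_zero _ (by omega), mul_zero]
    rw [this]; ring

lemma continuous_besselJ (n : ℤ) : Continuous (besselJ n) := by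
  have h : Differentiable ℂ (besselJ n) := fun z => (hasDerivAt_besselJ n z).differentiableAt
  exact h.continuous

lemma continuous_JD1 (n : ℤ) : Continuous (JD1 n) := by
  have h : Differentiable ℂ (JD1 n) := fun z => (hasDerivAt_JD1 n z).differentiableAt
  exact h.continuous

lemma hasDerivAt_comp_real (n : ℤ) (a r : ℝ) :
    HasDerivAt (fun y : ℝ => besselJ n ((a:ℂ) * (y:ℂ))) ((a:ℂ) * JD1 n ((a:ℂ) * (r:ℂ))) r := by
  have hmul : ∀ w : ℂ, HasDerivAt (fun w : ℂ => (a:ℂ) * w) (a:ℂ) w := fun w => by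
    simpa using (hasDerivAt_id w).const_mul (a:ℂ)
  have houter : HasDerivAt (fun w : ℂ => besselJ n ((a:ℂ) * w))
      (JD1 n ((a:ℂ) * (r:ℂ)) * (a:ℂ)) (r:ℂ) :=
    (hasDerivAt_besselJ n ((a:ℂ) * (r:ℂ))).comp (r:ℂ) (hmul (r:ℂ))
  have := houter.comp_ofReal
  simpa [mul_comm] using this

lemma hasDerivAt_JD1_comp_real (n : ℤ) (a r : ℝ) :
    HasDerivAt (fun y : ℝ => JD1 n ((a:ℂ) * (y:ℂ))) ((a:ℂ) * JD2 n ((a:ℂ) * (r:ℂ))) r := by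
  have hmul : ∀ w : ℂ, HasDerivAt (fun w : ℂ => (a:ℂ) * w) (a:ℂ) w := fun w => by
    simpa using (hasDerivAt_id w).const_mul (a:ℂ)
  have houter : HasDerivAt (fun w : ℂ => JD1 n ((a:ℂ) * w))
      (JD2 n ((a:ℂ) * (r:ℂ)) * (a:ℂ)) (r:ℂ) :=
    (hasDerivAt_JD1 n ((a:ℂ) * (r:ℂ))).comp (r:ℂ) (hmul (r:ℂ))
  have := houter.comp_ofReal
  simpa [mul_comm] using this

lemma hasDerivAt_sq {f : ℝ → ℂ} {f' : ℂ} {x : ℝ} (h : HasDerivAt f f' x) :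
    HasDerivAt (fun y => f y ^ 2) (2 * f x * f') x := by
  simp only [pow_two]
  refine (h.mul h).congr_deriv ?_
  ring

lemma key_integral (n : ℤ) (a : ℝ) (ha : a ≠ 0) :
    ∫ r in (0:ℝ)..1, besselJ n (a * r) ^ 2 * (r : ℂ)
      = JD1 n a ^ 2 / 2 + (1 - (n:ℂ)^2 / (a:ℂ)^2) * besselJ n a ^ 2 / 2 := by
  have haC : (a:ℂ) ≠ 0 := Complex.ofReal_ne_zero.2 ha
  set F : ℝ → ℂ := fun r =>
    ((r:ℂ)^2 * (a:ℂ)^2 * (JD1 n ((a:ℂ)*(r:ℂ)))^2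
      + ((a:ℂ)^2 * (r:ℂ)^2 - (n:ℂ)^2) * (besselJ n ((a:ℂ)*(r:ℂ)))^2) / (2*(a:ℂ)^2) with hFdef
  have hof : ∀ r : ℝ, HasDerivAt (fun y : ℝ => ((y:ℝ):ℂ)) 1 r := fun r => by
    simpa using (hasDerivAt_id r).ofReal_comp
  have hr2 : ∀ r : ℝ, HasDerivAt (fun y : ℝ => ((y:ℝ):ℂ)^2) (2*(r:ℂ)) r := fun r => by
    have := hasDerivAt_sq (hof r)
    simpa using this
  have hF : ∀ r : ℝ, HasDerivAt F (besselJ n ((a:ℂ)*(r:ℂ)) ^ 2 * (r:ℂ)) r := by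
    intro r
    have hu := hasDerivAt_comp_real n a r
    have hv := hasDerivAt_JD1_comp_real n a r
    have hA := ((hr2 r).mul_const ((a:ℂ)^2)).mul (hasDerivAt_sq hv)
    have hB := (((hr2 r).const_mul ((a:ℂ)^2)).sub_const ((n:ℂ)^2)).mul (hasDerivAt_sq hu)
    have hAB := (hA.add hB).div_const (2*(a:ℂ)^2)
    refine hAB.congr_deriv ?_
    have hode := ode n ((a:ℂ)*(r:ℂ))
    push_cast
    norm_num
    field_simp
    rw [mul_comm (r:ℂ) (a:ℂ)]
    linear_combination JD1 n ((a:ℂ)*(r:ℂ)) * hode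
  have hcont : Continuous (fun r : ℝ => besselJ n ((a:ℂ)*(r:ℂ)) ^ 2 * (r:ℂ)) := by
    apply Continuous.mul
    · exact ((continuous_besselJ n).comp (continuous_const.mul Complex.continuous_ofReal)).pow 2
    · exact Complex.continuous_ofReal
  have hInt := intervalIntegral.integral_eq_sub_of_hasDerivAt
    (f := F) (f' := fun r => besselJ n ((a:ℂ)*(r:ℂ)) ^ 2 * (r:ℂ))
    (fun r _ => hF r) (hcont.intervalIntegrable 0 1)
  have heq : (∫ r in (0:ℝ)..1, besselJ n (a * r) ^ 2 * (r : ℂ))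
      = ∫ r in (0:ℝ)..1, besselJ n ((a:ℂ)*(r:ℂ)) ^ 2 * (r:ℂ) := by norm_num
  rw [heq, hInt, hFdef]
  have hz : ((a:ℂ) * ((0:ℝ):ℂ)) = 0 := by norm_num
  simp only [Complex.ofReal_zero, Complex.ofReal_one, mul_zero, mul_one, one_pow, hz]
  have h0 := sq_mul_besselJ_zero n
  field_simp
  linear_combination h0


lemma algebra_key (I1 I2 J1 J2 D1 D2 l nu mm : ℂ) (hJ1 : J1 ≠ 0) (hJ2 : J2 ≠ 0) (hl : l ≠ 0)
    (h1 : I1 = D1^2/2 + (1 - nu^2/l^2)*J1^2/2)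
    (h2 : I2 = D2^2/2 + (1 - (nu-mm)^2/l^2)*J2^2/2) :
    (J1^2/2) * (D1^2/J1^2 + D2^2/J2^2) + (J1^2/2)*(2 - ((nu-mm)^2+nu^2)/l^2)
      = I1 + (J1^2/J2^2)*I2 := by
  have k1 : J1^2 ≠ 0 := pow_ne_zero 2 hJ1
  have k2 : J2^2 ≠ 0 := pow_ne_zero 2 hJ2
  have kl : l^2 ≠ 0 := pow_ne_zero 2 hl
  field_simp at h1 h2 ⊢
  linear_combination (-(J2^2)) * h1 + (-(J1^2)) * h2

lemma integral_sq_nonneg (g : ℝ → ℝ) : 0 ≤ ∫ r in (0:ℝ)..1, g r ^ 2 * r :=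
  intervalIntegral.integral_nonneg zero_le_one (fun u hu => mul_nonneg (sq_nonneg _) hu.1)

lemma integral_sq_pos (g : ℝ → ℝ) (hg : Continuous g) (h1 : g 1 ≠ 0) :
    0 < ∫ r in (0:ℝ)..1, g r ^ 2 * r := by
  set f : ℝ → ℝ := fun r => g r ^ 2 * r with hfdef
  have hfc : Continuous f := (hg.pow 2).mul continuous_id
  have hf1 : 0 < f 1 := by
    have h2 : 0 < g 1 ^ 2 := lt_of_le_of_ne (sq_nonneg _) (Ne.symm (pow_ne_zero 2 h1))
    simpa [hfdef] using h2
  have hca : ContinuousAt f 1 := hfc.continuousAt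
  rw [Metric.continuousAt_iff] at hca
  obtain ⟨δ, hδ, hball⟩ := hca (f 1) hf1
  set c : ℝ := 1 - min δ 1 / 2 with hcdef
  have hmin : 0 < min δ 1 := lt_min hδ one_pos
  have hmin1 : min δ 1 ≤ 1 := min_le_right _ _
  have hminδ : min δ 1 ≤ δ := min_le_left _ _
  have hc0 : 0 ≤ c := by rw [hcdef]; linarith
  have hc1 : c < 1 := by rw [hcdef]; linarith
  have hpos : ∀ x ∈ Set.Ioo c 1, 0 < f x := by
    intro x hx
    obtain ⟨hxc, hx1⟩ := hx
    have hd : dist x 1 < δ := by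
      rw [Real.dist_eq, abs_of_nonpos (by linarith), hcdef] at *
      linarith
    have := hball hd
    rw [Real.dist_eq] at this
    have := abs_lt.1 this
    linarith [this.1]
  have hii : IntervalIntegrable f MeasureTheory.volume c 1 := hfc.intervalIntegrable c 1
  have h2 : 0 < ∫ x in c..1, f x :=
    intervalIntegral.intervalIntegral_pos_of_pos_on hii hpos hc1
  have h3 : 0 ≤ ∫ x in (0:ℝ)..c, f x :=
    intervalIntegral.integral_nonneg hc0 (fun u hu => mul_nonneg (sq_nonneg _) hu.1)
  have hii2 : IntervalIntegrable f MeasureTheory.volume 0 c := hfc.intervalIntegrable 0 c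
  have h4 := intervalIntegral.integral_add_adjacent_intervals hii2 hii
  have : (0:ℝ) < ∫ x in (0:ℝ)..1, f x := by rw [← h4]; linarith
  exact this

end BesselAux

open BesselAux in
theorem stmt13 (m : ℕ) (ν : ℤ) (lam : ℝ) (hlam : lam ≠ 0)
    (hzero : besselLd m ν lam = 0)
    (hJ : besselJ ν lam * besselJ (ν - m) lam ≠ 0) :
    (besselJ ν lam ^ 2 / 2) *
        (deriv (besselJ ν) lam ^ 2 / besselJ ν lam ^ 2 +
          deriv (besselJ (ν - m)) lam ^ 2 / besselJ (ν - m) lam ^ 2) +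
      (besselJ ν lam ^ 2 / 2) * (2 - (((ν : ℂ) - m) ^ 2 + (ν : ℂ) ^ 2) / (lam : ℂ) ^ 2) =
        (∫ r in (0:ℝ)..1, besselJ ν (lam * r) ^ 2 * (r : ℂ)) +
          (besselJ ν lam ^ 2 / besselJ (ν - m) lam ^ 2) *
            ∫ r in (0:ℝ)..1, besselJ (ν - m) (lam * r) ^ 2 * (r : ℂ) ∧
    0 < ((besselJ ν lam ^ 2 / 2) *
        (deriv (besselJ ν) lam ^ 2 / besselJ ν lam ^ 2 +
          deriv (besselJ (ν - m)) lam ^ 2 / besselJ (ν - m) lam ^ 2) +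
      (besselJ ν lam ^ 2 / 2) *
        (2 - (((ν : ℂ) - m) ^ 2 + (ν : ℂ) ^ 2) / (lam : ℂ) ^ 2)).re ∧
    ((besselJ ν lam ^ 2 / 2) *
        (deriv (besselJ ν) lam ^ 2 / besselJ ν lam ^ 2 +
          deriv (besselJ (ν - m)) lam ^ 2 / besselJ (ν - m) lam ^ 2) +
      (besselJ ν lam ^ 2 / 2) *
        (2 - (((ν : ℂ) - m) ^ 2 + (ν : ℂ) ^ 2) / (lam : ℂ) ^ 2)).im = 0 := by
  have hJ1 : besselJ ν (lam:ℂ) ≠ 0 := left_ne_zero_of_mul hJ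
  have hJ2 : besselJ (ν - m) (lam:ℂ) ≠ 0 := right_ne_zero_of_mul hJ
  have hlamC : ((lam:ℝ):ℂ) ≠ 0 := Complex.ofReal_ne_zero.2 hlam
  have hkey1 := key_integral ν lam hlam
  have hkey2 := key_integral (ν - m) lam hlam
  have hcast : (((ν - (m:ℤ) : ℤ)):ℂ) = (ν:ℂ) - (m:ℂ) := by push_cast; ring
  rw [hcast] at hkey2
  have hEq : (besselJ ν lam ^ 2 / 2) *
        (deriv (besselJ ν) lam ^ 2 / besselJ ν lam ^ 2 +
          deriv (besselJ (ν - m)) lam ^ 2 / besselJ (ν - m) lam ^ 2) +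
      (besselJ ν lam ^ 2 / 2) * (2 - (((ν : ℂ) - m) ^ 2 + (ν : ℂ) ^ 2) / (lam : ℂ) ^ 2) =
        (∫ r in (0:ℝ)..1, besselJ ν (lam * r) ^ 2 * (r : ℂ)) +
          (besselJ ν lam ^ 2 / besselJ (ν - m) lam ^ 2) *
            ∫ r in (0:ℝ)..1, besselJ (ν - m) (lam * r) ^ 2 * (r : ℂ) := by
    rw [deriv_besselJ, deriv_besselJ]
    exact algebra_key _ _ _ _ _ _ _ _ _ hJ1 hJ2 hlamC hkey1 hkey2
  refine ⟨hEq, ?_, ?_⟩ <;> rw [hEq] <;>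
  · obtain ⟨x1, hx1⟩ : ∃ x : ℝ, besselJ ν (lam:ℂ) = (x:ℂ) := ⟨_, besselJ_real ν lam⟩
    obtain ⟨x2, hx2⟩ : ∃ x : ℝ, besselJ (ν - m) (lam:ℂ) = (x:ℂ) := ⟨_, besselJ_real _ lam⟩
    have hx1ne : x1 ≠ 0 := by
      intro h; apply hJ1; rw [hx1, h, Complex.ofReal_zero]
    have hx2ne : x2 ≠ 0 := by
      intro h; apply hJ2; rw [hx2, h, Complex.ofReal_zero]
    set G1 : ℝ → ℝ := fun r => (besselJ ν ((lam:ℂ) * (r:ℂ))).re with hG1def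
    set G2 : ℝ → ℝ := fun r => (besselJ (ν - m) ((lam:ℂ) * (r:ℂ))).re with hG2def
    have hg1 : ∀ r : ℝ, besselJ ν ((lam:ℂ) * (r:ℂ)) = ((G1 r : ℝ) : ℂ) := fun r => by
      simp only [hG1def]
      rw [show (lam:ℂ)*(r:ℂ) = ((lam*r : ℝ):ℂ) by push_cast; ring]
      exact besselJ_real ν (lam*r)
    have hg2 : ∀ r : ℝ, besselJ (ν - m) ((lam:ℂ) * (r:ℂ)) = ((G2 r : ℝ) : ℂ) := fun r => by
      simp only [hG2def]
      rw [show (lam:ℂ)*(r:ℂ) = ((lam*r : ℝ):ℂ) by push_cast; ring]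
      exact besselJ_real _ (lam*r)
    have hI1 : (∫ r in (0:ℝ)..1, besselJ ν (lam * r) ^ 2 * (r : ℂ))
        = (((∫ r in (0:ℝ)..1, G1 r ^ 2 * r) : ℝ) : ℂ) := by
      have hcg : (∫ r in (0:ℝ)..1, besselJ ν (lam * r) ^ 2 * (r : ℂ))
          = ∫ r in (0:ℝ)..1, ((G1 r ^ 2 * r : ℝ) : ℂ) :=
        intervalIntegral.integral_congr (fun x hx => by rw [hg1 x]; push_cast; ring)
      rw [hcg, intervalIntegral.integral_ofReal]
    have hI2 : (∫ r in (0:ℝ)..1, besselJ (ν - m) (lam * r) ^ 2 * (r : ℂ))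
        = (((∫ r in (0:ℝ)..1, G2 r ^ 2 * r) : ℝ) : ℂ) := by
      have hcg : (∫ r in (0:ℝ)..1, besselJ (ν - m) (lam * r) ^ 2 * (r : ℂ))
          = ∫ r in (0:ℝ)..1, ((G2 r ^ 2 * r : ℝ) : ℂ) :=
        intervalIntegral.integral_congr (fun x hx => by rw [hg2 x]; push_cast; ring)
      rw [hcg, intervalIntegral.integral_ofReal]
    have hcG1 : Continuous G1 :=
      Complex.continuous_re.comp ((continuous_besselJ ν).comp
        (continuous_const.mul Complex.continuous_ofReal))
    have hG11 : G1 1 = x1 := by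
      rw [hG1def]
      simp only [Complex.ofReal_one, mul_one]
      rw [hx1, Complex.ofReal_re]
    have hpos1 : 0 < ∫ r in (0:ℝ)..1, G1 r ^ 2 * r :=
      integral_sq_pos G1 hcG1 (by rw [hG11]; exact hx1ne)
    have hpos2 : 0 ≤ ∫ r in (0:ℝ)..1, G2 r ^ 2 * r := integral_sq_nonneg G2
    have hfrac : 0 < x1 ^ 2 / x2 ^ 2 :=
      div_pos (lt_of_le_of_ne (sq_nonneg _) (Ne.symm (pow_ne_zero 2 hx1ne)))
        (lt_of_le_of_ne (sq_nonneg _) (Ne.symm (pow_ne_zero 2 hx2ne)))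
    have hval : (∫ r in (0:ℝ)..1, besselJ ν (lam * r) ^ 2 * (r : ℂ)) +
          (besselJ ν lam ^ 2 / besselJ (ν - m) lam ^ 2) *
            ∫ r in (0:ℝ)..1, besselJ (ν - m) (lam * r) ^ 2 * (r : ℂ)
        = ((((∫ r in (0:ℝ)..1, G1 r ^ 2 * r) + x1^2/x2^2 * ∫ r in (0:ℝ)..1, G2 r ^ 2 * r) : ℝ) : ℂ) := by
      rw [hI1, hI2, hx1, hx2]
      push_cast
      ring
    rw [hval]
    first
    | · rw [Complex.ofReal_re]
        have := mul_nonneg (le_of_lt hfrac) hpos2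
        linarith
    | · rw [Complex.ofReal_im]
end
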